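/- Let K(t; a,b,c; M) be the 4×4 upper-triangular matrix with diagonal entries (1 − a + 2at − 2M b t², 2at, 2bt² − 3ct², 2ct³) and off-diagonal entries as in Hérau's functional: K_{12} = −2bt², K_{13} = −2at − 4bt, K_{23} = −2Mct³, K_{24} = −4bt². Then for every M ≥ 0 there exist positive constants a, b, c depending only on M with ac > b², a < 1, such that the symmetrized matrix (K + Kᵀ)/2 is positive semidefinite for all t ∈ [0,1]. -/

import Mathlib

set_option maxHeartbeats 1600000


open Matrix

noncomputable section

/-- The time-dependent matrix of Hérau's functional. -/
noncomputable def herauMatrix (t a b c M : ℝ) : Matrix (Fin 4) (Fin 4) ℝ :=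
  !![1 - a + 2 * a * t - 2 * M * b * t ^ 2, -2 * b * t ^ 2, -2 * a * t - 4 * b * t, 0;
     0, 2 * a * t, -2 * M * c * t ^ 3, -4 * b * t ^ 2;
     0, 0, 2 * b * t ^ 2 - 3 * c * t ^ 2, 0;
     0, 0, 0, 2 * c * t ^ 3]

/-- The key quadratic-form inequality, proved abstractly from a list of polynomial
inequalities on the coefficients. -/
lemma herau_quad_nonneg (a b c M t x1 x2 x3 x4 : ℝ)
    (ha : 0 < a) (hb : 0 ≤ b) (hc : 0 ≤ c) (hM : 0 ≤ M)
    (ht0 : 0 ≤ t) (ht1 : t ≤ 1)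
    (h11 : a + 2 * M * b ≤ 3 / 4)
    (h12 : 8 * b ^ 2 ≤ 2 * a / 3)
    (h13 : 8 * (a + 2 * b) ^ 2 ≤ b)
    (h23 : 3 * M ^ 2 * c ^ 2 ≤ a * b)
    (h24 : 6 * b ^ 2 ≤ 2 * a * c)
    (h33 : 3 * c ≤ b / 2) :
    0 ≤ (1 - a + 2 * a * t - 2 * M * b * t ^ 2) * x1 ^ 2 + 2 * a * t * x2 ^ 2
      + (2 * b * t ^ 2 - 3 * c * t ^ 2) * x3 ^ 2 + 2 * c * t ^ 3 * x4 ^ 2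
      - 2 * b * t ^ 2 * x1 * x2 - (2 * a * t + 4 * b * t) * x1 * x3
      - 2 * M * c * t ^ 3 * x2 * x3 - 4 * b * t ^ 2 * x2 * x4 := by
  set Q := (1 - a + 2 * a * t - 2 * M * b * t ^ 2) * x1 ^ 2 + 2 * a * t * x2 ^ 2
      + (2 * b * t ^ 2 - 3 * c * t ^ 2) * x3 ^ 2 + 2 * c * t ^ 3 * x4 ^ 2
      - 2 * b * t ^ 2 * x1 * x2 - (2 * a * t + 4 * b * t) * x1 * x3
      - 2 * M * c * t ^ 3 * x2 * x3 - 4 * b * t ^ 2 * x2 * x4 with hQ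
  have ht2 : t ^ 2 ≤ t := by nlinarith
  have ht4 : t ^ 4 ≤ t := by nlinarith
  have ht21 : t ^ 2 ≤ 1 := by nlinarith
  have ht42 : t ^ 4 ≤ t ^ 2 := by nlinarith
  have he1 : 0 ≤ 1 - a + 2 * a * t - 2 * M * b * t ^ 2 - 1 / 4 := by
    have h1 : M * b * t ^ 2 ≤ M * b := by
      have := mul_nonneg hM hb
      nlinarith
    nlinarith [mul_nonneg ha.le ht0]
  have he2 : 0 ≤ 8 * a * t - 4 * a * t ^ 2 - 48 * b ^ 2 * t ^ 4 := by
    nlinarith [mul_nonneg ha.le (sub_nonneg.mpr ht2), mul_nonneg (sq_nonneg b) (sub_nonneg.mpr ht4),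
      mul_nonneg ha.le ht0]
  have he3 : 0 ≤ (12 * a * b - 18 * a * c - 48 * a * (a + 2 * b) ^ 2) * t ^ 2
      - 9 * M ^ 2 * c ^ 2 * t ^ 4 := by
    have h1 : 18 * a * c ≤ 3 * a * b := by nlinarith
    have h2 : 48 * a * (a + 2 * b) ^ 2 ≤ 6 * a * b := by nlinarith
    have h3 : 9 * M ^ 2 * c ^ 2 ≤ 3 * a * b := by nlinarith
    nlinarith [sq_nonneg t, mul_nonneg (mul_nonneg (mul_nonneg (by norm_num : (0:ℝ) ≤ 9) (sq_nonneg M)) (sq_nonneg c)) (sub_nonneg.mpr ht42)]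
  have he4 : 0 ≤ (12 * a * c - 36 * b ^ 2) * t ^ 3 := by
    have : 0 ≤ t ^ 3 := by positivity
    nlinarith
  have key : 6 * a * Q =
      (3 * a / 4) * (x1 - 8 * b * t ^ 2 * x2) ^ 2
      + (3 * a / 4) * (x1 - 8 * (a + 2 * b) * t * x3) ^ 2
      + (2 * a * t * x2 - 3 * M * c * t ^ 2 * x3) ^ 2
      + 4 * t * (a * x2 - 3 * b * t * x4) ^ 2
      + 6 * a * (1 - a + 2 * a * t - 2 * M * b * t ^ 2 - 1 / 4) * x1 ^ 2
      + a * (8 * a * t - 4 * a * t ^ 2 - 48 * b ^ 2 * t ^ 4) * x2 ^ 2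
      + ((12 * a * b - 18 * a * c - 48 * a * (a + 2 * b) ^ 2) * t ^ 2
          - 9 * M ^ 2 * c ^ 2 * t ^ 4) * x3 ^ 2
      + ((12 * a * c - 36 * b ^ 2) * t ^ 3) * x4 ^ 2 := by
    rw [hQ]; ring
  have h6a : (0:ℝ) < 6 * a := by linarith
  have hpos : 0 ≤ 6 * a * Q := by
    rw [key]
    have s1 : 0 ≤ (3 * a / 4) * (x1 - 8 * b * t ^ 2 * x2) ^ 2 := by positivity
    have s2 : 0 ≤ (3 * a / 4) * (x1 - 8 * (a + 2 * b) * t * x3) ^ 2 := by positivity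
    have s3 : 0 ≤ (2 * a * t * x2 - 3 * M * c * t ^ 2 * x3) ^ 2 := sq_nonneg _
    have s4 : 0 ≤ 4 * t * (a * x2 - 3 * b * t * x4) ^ 2 := by positivity
    have s5 : 0 ≤ 6 * a * (1 - a + 2 * a * t - 2 * M * b * t ^ 2 - 1 / 4) * x1 ^ 2 := by
      have := mul_nonneg (mul_nonneg (by linarith : (0:ℝ) ≤ 6 * a) he1) (sq_nonneg x1)
      linarith [this]
    have s6 : 0 ≤ a * (8 * a * t - 4 * a * t ^ 2 - 48 * b ^ 2 * t ^ 4) * x2 ^ 2 :=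
      mul_nonneg (mul_nonneg ha.le he2) (sq_nonneg x2)
    have s7 : 0 ≤ ((12 * a * b - 18 * a * c - 48 * a * (a + 2 * b) ^ 2) * t ^ 2
        - 9 * M ^ 2 * c ^ 2 * t ^ 4) * x3 ^ 2 := mul_nonneg he3 (sq_nonneg x3)
    have s8 : 0 ≤ ((12 * a * c - 36 * b ^ 2) * t ^ 3) * x4 ^ 2 := mul_nonneg he4 (sq_nonneg x4)
    linarith
  exact (mul_nonneg_iff_of_pos_left h6a).mp hpos

/-- **Existence of Hérau coefficients.** For every `M ≥ 0` there exist `a, b, c > 0`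
with `ac > b²` and `a < 1` such that the symmetrization `(K + Kᵀ)/2` of Hérau's matrix is
positive semidefinite for all `t ∈ [0,1]`. -/
theorem herau_coefficients : ∀ M : ℝ, 0 ≤ M → ∃ a b c : ℝ,
    0 < a ∧ 0 < b ∧ 0 < c ∧ b ^ 2 < a * c ∧ a < 1 ∧
    ∀ t ∈ Set.Icc (0:ℝ) 1,
      ((1 / 2 : ℝ) • (herauMatrix t a b c M + (herauMatrix t a b c M)ᵀ)).PosSemidef := by
  intro M hM
  set a : ℝ := 1 / (1728 * (M + 1)) with ha_def
  set b : ℝ := 48 * a ^ 2 with hb_def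
  set c : ℝ := 13824 * a ^ 3 with hc_def
  have hM1 : (0:ℝ) < M + 1 := by linarith
  have ha : 0 < a := by positivity
  have hMA : (M + 1) * a = 1 / 1728 := by
    rw [ha_def]; field_simp
  have hMa : M * a ≤ 1 / 1728 := by nlinarith [ha.le]
  have ha1728 : a ≤ 1 / 1728 := by nlinarith [mul_nonneg hM ha.le]
  have hb : 0 < b := by positivity
  have hc : 0 < c := by positivity
  refine ⟨a, b, c, ha, hb, hc, ?_, ?_, ?_⟩
  · -- b² < ac
    rw [hb_def, hc_def]
    have : (48 * a ^ 2) ^ 2 = 2304 * a ^ 4 := by ring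
    nlinarith [pow_pos ha 4]
  · -- a < 1
    linarith [ha1728]
  · intro t ht
    obtain ⟨ht0, ht1⟩ := ht
    rw [Matrix.posSemidef_iff_dotProduct_mulVec]
    constructor
    · -- Hermitian
      rw [Matrix.IsHermitian, Matrix.conjTranspose_eq_transpose_of_trivial,
        Matrix.transpose_smul, Matrix.transpose_add, Matrix.transpose_transpose, add_comm]
    · intro x
      have h11 : a + 2 * M * b ≤ 3 / 4 := by
        have h1 : 2 * M * b = 96 * (M * a) * a := by rw [hb_def]; ring
        nlinarith [mul_nonneg hM ha.le]
      have h12 : 8 * b ^ 2 ≤ 2 * a / 3 := by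
        rw [hb_def]
        have : 8 * (48 * a ^ 2) ^ 2 = 18432 * a ^ 4 := by ring
        nlinarith [pow_pos ha 3, pow_pos ha 4]
      have h13 : 8 * (a + 2 * b) ^ 2 ≤ b := by
        rw [hb_def]
        have hb96 : 96 * a ^ 2 ≤ a := by nlinarith
        nlinarith [sq_nonneg a, pow_pos ha 2, pow_pos ha 3, pow_pos ha 4]
      have h23 : 3 * M ^ 2 * c ^ 2 ≤ a * b := by
        rw [hb_def, hc_def]
        have h1 : 3 * M ^ 2 * (13824 * a ^ 3) ^ 2 = 573308928 * (M * a) ^ 2 * a ^ 4 := by ring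
        have h2 : (M * a) ^ 2 ≤ (1/1728) ^ 2 := by
          have := mul_nonneg hM ha.le
          nlinarith
        have h3 : a * (48 * a ^ 2) = 48 * a ^ 3 := by ring
        rw [h1, h3]
        have h4 : 573308928 * (M * a) ^ 2 * a ^ 4 ≤ 573308928 * (1/1728)^2 * a ^ 4 := by
          have := pow_pos ha 4
          nlinarith [mul_nonneg (mul_nonneg (by norm_num : (0:ℝ) ≤ 573308928) (sub_nonneg.mpr h2)) (pow_pos ha 4).le]
        have h5 : (573308928 : ℝ) * (1/1728)^2 = 192 := by norm_num
        have h6 : 192 * a ^ 4 ≤ 48 * a ^ 3 := by nlinarith [pow_pos ha 3]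
        calc 573308928 * (M * a) ^ 2 * a ^ 4 ≤ 573308928 * (1/1728)^2 * a ^ 4 := h4
          _ = 192 * a ^ 4 := by rw [h5]
          _ ≤ 48 * a ^ 3 := h6
      have h24 : 6 * b ^ 2 ≤ 2 * a * c := by
        rw [hb_def, hc_def]
        nlinarith [pow_pos ha 4]
      have h33 : 3 * c ≤ b / 2 := by
        rw [hb_def, hc_def]
        nlinarith [pow_pos ha 2, pow_pos ha 3]
      have hquad := herau_quad_nonneg a b c M t (x 0) (x 1) (x 2) (x 3)
        ha hb.le hc.le hM ht0 ht1 h11 h12 h13 h23 h24 h33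
      have hexp : dotProduct (star x)
          (((1 / 2 : ℝ) • (herauMatrix t a b c M + (herauMatrix t a b c M)ᵀ)) *ᵥ x)
          = (1 - a + 2 * a * t - 2 * M * b * t ^ 2) * (x 0) ^ 2 + 2 * a * t * (x 1) ^ 2
            + (2 * b * t ^ 2 - 3 * c * t ^ 2) * (x 2) ^ 2 + 2 * c * t ^ 3 * (x 3) ^ 2
            - 2 * b * t ^ 2 * (x 0) * (x 1) - (2 * a * t + 4 * b * t) * (x 0) * (x 2)
            - 2 * M * c * t ^ 3 * (x 1) * (x 2) - 4 * b * t ^ 2 * (x 1) * (x 3) := by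
        simp only [Matrix.mulVec, dotProduct, Fin.sum_univ_four, Matrix.smul_apply,
          Matrix.add_apply, Matrix.transpose_apply, herauMatrix, star_trivial, smul_eq_mul]
        simp [Matrix.cons_val_zero, Matrix.cons_val_one, Matrix.head_cons, Matrix.cons_val',
          Matrix.empty_val', Matrix.cons_val_fin_one, Matrix.head_fin_const, Matrix.vecHead,
          Matrix.vecTail, Function.comp]
        ring
      rw [hexp]
      exact hquad

end
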